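/- arXiv:2412.11295 — 8 statements merged into one kernel-verified Lean document; each statement's English description precedes it below -/
import Mathlib

section
/- Let R be a relational doctrine on a category C and f : A → X, g : B → Y arrows of C. Then for every α ∈ R(X,Y) one has R(f,g)(α) = gr(f) ; α ; gr(g)°, and the monotone map E(f,g)(β) = gr(f)° ; β ; gr(g) from R(A,B) to R(X,Y) is left adjoint to the reindexing R(f,g) : R(X,Y) → R(A,B), i.e. for all β ∈ R(A,B) and α ∈ R(X,Y): β ≤ R(f,g)(α) if and only if gr(f)° ; β ; gr(g) ≤ α. -/
open CategoryTheory

universe w w' v v' u u'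

/-- A relational doctrine on a category `C` with fibres `P X Y` (posets):
a contravariant functor `(C^op × C^op) → Pos` with identities, composition and converse. -/
structure RelDoctrine (C : Type u) [Category.{v} C] (P : C → C → Type w)
    [∀ X Y : C, PartialOrder (P X Y)] where
  reidx : ∀ {A X B Y : C}, (A ⟶ X) → (B ⟶ Y) → P X Y → P A B
  reidx_mono : ∀ {A X B Y : C} (f : A ⟶ X) (g : B ⟶ Y), Monotone (reidx f g)
  reidx_id : ∀ {X Y : C} (α : P X Y), reidx (𝟙 X) (𝟙 Y) α = α
  reidx_comp :
    ∀ {A X X' B Y Y' : C} (f : A ⟶ X) (f' : X ⟶ X') (g : B ⟶ Y) (g' : Y ⟶ Y') (α : P X' Y'),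
      reidx (f ≫ f') (g ≫ g') α = reidx f g (reidx f' g' α)
  d : ∀ X : C, P X X
  comp : ∀ {X Y Z : C}, P X Y → P Y Z → P X Z
  comp_mono : ∀ {X Y Z : C} {α α' : P X Y} {β β' : P Y Z},
      α ≤ α' → β ≤ β' → comp α β ≤ comp α' β'
  conv : ∀ {X Y : C}, P X Y → P Y X
  conv_mono : ∀ {X Y : C} {α α' : P X Y}, α ≤ α' → conv α ≤ conv α'
  d_le_reidx : ∀ {X Y : C} (f : X ⟶ Y), d X ≤ reidx f f (d Y)
  comp_reidx_le : ∀ {X A Y B Z W : C} (f : X ⟶ A) (g : Y ⟶ B) (h : Z ⟶ W)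
      (α : P A B) (β : P B W),
      comp (reidx f g α) (reidx g h β) ≤ reidx f h (comp α β)
  conv_reidx_le : ∀ {X A Y B : C} (f : X ⟶ A) (g : Y ⟶ B) (α : P A B),
      conv (reidx f g α) ≤ reidx g f (conv α)
  comp_assoc : ∀ {X Y Z W : C} (α : P X Y) (β : P Y Z) (γ : P Z W),
      comp α (comp β γ) = comp (comp α β) γ
  d_comp : ∀ {X Y : C} (α : P X Y), comp (d X) α = α
  comp_d : ∀ {X Y : C} (α : P X Y), comp α (d Y) = α
  conv_comp : ∀ {X Y Z : C} (α : P X Y) (β : P Y Z),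
      conv (comp α β) = comp (conv β) (conv α)
  conv_d : ∀ X : C, conv (d X) = d X
  conv_conv : ∀ {X Y : C} (α : P X Y), conv (conv α) = α

namespace RelDoctrine

variable {C : Type u} [Category.{v} C] {P : C → C → Type w} [∀ X Y : C, PartialOrder (P X Y)]

/-- The graph of an arrow `f : X ⟶ Y` is `R(f, id_Y)(d_Y)`. -/
def gr (D : RelDoctrine C P) {X Y : C} (f : X ⟶ Y) : P X Y :=
  D.reidx f (𝟙 Y) (D.d Y)

/-- `α` is functional: `α° ; α ≤ d_Y`. -/
def Functional (D : RelDoctrine C P) {X Y : C} (α : P X Y) : Prop :=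
  D.comp (D.conv α) α ≤ D.d Y

/-- `α` is total: `d_X ≤ α ; α°`. -/
def Total (D : RelDoctrine C P) {X Y : C} (α : P X Y) : Prop :=
  D.d X ≤ D.comp α (D.conv α)

/-- `α` is injective: `α ; α° ≤ d_X`. -/
def InjectiveRel (D : RelDoctrine C P) {X Y : C} (α : P X Y) : Prop :=
  D.comp α (D.conv α) ≤ D.d X

/-- `α` is surjective: `d_Y ≤ α° ; α`. -/
def SurjectiveRel (D : RelDoctrine C P) {X Y : C} (α : P X Y) : Prop :=
  D.d Y ≤ D.comp (D.conv α) α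

/-- The kernel of an arrow `f` is `gr(f) ; gr(f)°`. -/
def kernelOf (D : RelDoctrine C P) {X Y : C} (f : X ⟶ Y) : P X X :=
  D.comp (D.gr f) (D.conv (D.gr f))

/-- An `R`-equivalence relation: reflexive, symmetric, transitive. -/
def IsEquivRel (D : RelDoctrine C P) {X : C} (ρ : P X X) : Prop :=
  D.d X ≤ ρ ∧ D.conv ρ ≤ ρ ∧ D.comp ρ ρ ≤ ρ

/-- `q : X ⟶ W` is a quotient arrow of the equivalence relation `ρ` on `X`. -/
def IsQuotientArrow (D : RelDoctrine C P) {X W : C} (ρ : P X X) (q : X ⟶ W) : Prop :=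
  ρ ≤ D.kernelOf q ∧
    ∀ (Z : C) (f : X ⟶ Z), ρ ≤ D.kernelOf f → ∃! h : W ⟶ Z, f = q ≫ h

/-- The quotient arrow `q` of `ρ` is effective: `ρ = gr(q) ; gr(q)°`. -/
def Effective (D : RelDoctrine C P) {X W : C} (ρ : P X X) (q : X ⟶ W) : Prop :=
  ρ = D.kernelOf q

/-- The arrow `q` is descent: `d_W ≤ gr(q)° ; gr(q)`. -/
def Descent (D : RelDoctrine C P) {X W : C} (q : X ⟶ W) : Prop :=
  D.d W ≤ D.comp (D.conv (D.gr q)) (D.gr q)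

/-- `D` has quotients: every equivalence relation admits an effective descent quotient arrow. -/
def HasQuotients (D : RelDoctrine C P) : Prop :=
  ∀ (X : C) (ρ : P X X), D.IsEquivRel ρ →
    ∃ (W : C) (q : X ⟶ W), D.IsQuotientArrow ρ q ∧ D.Effective ρ q ∧ D.Descent q

/-- `f ≐ g` : the arrows `f, g` are `R`-equal, i.e. `d_X ≤ R(f,g)(d_Y)`. -/
def RExtEq (D : RelDoctrine C P) {X Y : C} (f g : X ⟶ Y) : Prop :=
  D.d X ≤ D.reidx f g (D.d Y)

/-- `D` is extensional: `R`-equal arrows are equal. -/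
def Extensional (D : RelDoctrine C P) : Prop :=
  ∀ (X Y : C) (f g : X ⟶ Y), D.RExtEq f g → f = g

/-- `D` is balanced: every bijective arrow is an isomorphism. -/
def BalancedDoc (D : RelDoctrine C P) : Prop :=
  ∀ (X Y : C) (f : X ⟶ Y), D.InjectiveRel (D.gr f) → D.SurjectiveRel (D.gr f) → IsIso f

/-- `Q` is `R`-projective with respect to quotient arrows. -/
def ProjectiveObj (D : RelDoctrine C P) (Q : C) : Prop :=
  ∀ (X Y : C) (f : Q ⟶ Y) (q : X ⟶ Y) (ρ : P X X),
    D.IsEquivRel ρ → D.IsQuotientArrow ρ q → ∃ h : Q ⟶ X, f = h ≫ q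

/-- Descent data with respect to equivalence relations `ρ` and `σ` : `ρ° ; α ; σ ≤ α`. -/
def Des (D : RelDoctrine C P) {X Y : C} (ρ : P X X) (σ : P Y Y) (α : P X Y) : Prop :=
  D.comp (D.comp (D.conv ρ) α) σ ≤ α

/-- The rule of unique choice: every functional total relation contains the graph of an arrow. -/
def RUC (D : RelDoctrine C P) : Prop :=
  ∀ (X Y : C) (α : P X Y), D.Functional α → D.Total α → ∃ f : X ⟶ Y, D.gr f ≤ α

end RelDoctrine

variable {C : Type u} [Category.{v} C] {P : C → C → Type w} [∀ X Y : C, PartialOrder (P X Y)]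

namespace RelDoctrine

variable {C : Type u} [Category.{v} C] {P : C → C → Type w} [∀ X Y : C, PartialOrder (P X Y)]

lemma conv_gr' (D : RelDoctrine C P) {X Y : C} (g : X ⟶ Y) :
    D.conv (D.gr g) = D.reidx (𝟙 Y) g (D.d Y) := by
  apply le_antisymm
  · have := D.conv_reidx_le g (𝟙 Y) (D.d Y)
    rwa [D.conv_d] at this
  · have h := D.conv_reidx_le (𝟙 Y) g (D.d Y)
    rw [D.conv_d] at h
    have := D.conv_mono h
    rwa [D.conv_conv] at this

lemma reidx_diag_left (D : RelDoctrine C P) {A X : C} (f : A ⟶ X) :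
    D.reidx f f (D.d X) = D.reidx f (𝟙 A) (D.conv (D.gr f)) := by
  rw [D.conv_gr' f]
  have := D.reidx_comp f (𝟙 X) (𝟙 A) f (D.d X)
  simpa using this

lemma reidx_diag_right (D : RelDoctrine C P) {A X : C} (f : A ⟶ X) :
    D.reidx f f (D.d X) = D.reidx (𝟙 A) f (D.gr f) := by
  have := D.reidx_comp (𝟙 A) f f (𝟙 X) (D.d X)
  simpa [gr] using this

end RelDoctrine

/-- Reindexing is expressed relationally and admits a left adjoint. -/
theorem statement2 (D : RelDoctrine C P) {A X B Y : C} (f : A ⟶ X) (g : B ⟶ Y) :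
    (∀ α : P X Y, D.reidx f g α = D.comp (D.comp (D.gr f) α) (D.conv (D.gr g))) ∧
      (∀ (β : P A B) (α : P X Y),
        β ≤ D.reidx f g α ↔ D.comp (D.comp (D.conv (D.gr f)) β) (D.gr g) ≤ α) := by
  -- sublemma: gr f° ; reidx f g α ; gr g ≤ α
  have counit : ∀ α : P X Y,
      D.comp (D.comp (D.conv (D.gr f)) (D.reidx f g α)) (D.gr g) ≤ α := by
    intro α
    have h1 : D.comp (D.conv (D.gr f)) (D.reidx f g α) ≤ D.reidx (𝟙 X) g α := by
      rw [D.conv_gr' f]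
      have := D.comp_reidx_le (𝟙 X) f g (D.d X) α
      rwa [D.d_comp] at this
    have h2 : D.comp (D.reidx (𝟙 X) g α) (D.gr g) ≤ α := by
      have := D.comp_reidx_le (𝟙 X) g (𝟙 Y) α (D.d Y)
      rw [D.comp_d, D.reidx_id] at this
      exact this
    calc D.comp (D.comp (D.conv (D.gr f)) (D.reidx f g α)) (D.gr g)
        ≤ D.comp (D.reidx (𝟙 X) g α) (D.gr g) := D.comp_mono h1 le_rfl
      _ ≤ α := h2
  -- sublemma: β ≤ reidx f g (gr f° ; β ; gr g)
  have unit : ∀ β : P A B,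
      β ≤ D.reidx f g (D.comp (D.comp (D.conv (D.gr f)) β) (D.gr g)) := by
    intro β
    have h1 : β ≤ D.comp (D.reidx f (𝟙 A) (D.conv (D.gr f))) β := by
      rw [← D.reidx_diag_left f]
      calc β = D.comp (D.d A) β := (D.d_comp β).symm
        _ ≤ _ := D.comp_mono (D.d_le_reidx f) le_rfl
    have h2 : D.comp (D.reidx f (𝟙 A) (D.conv (D.gr f))) β
        ≤ D.reidx f (𝟙 B) (D.comp (D.conv (D.gr f)) β) := by
      have := D.comp_reidx_le f (𝟙 A) (𝟙 B) (D.conv (D.gr f)) β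
      rwa [D.reidx_id] at this
    have h3 : D.reidx f (𝟙 B) (D.comp (D.conv (D.gr f)) β)
        ≤ D.comp (D.reidx f (𝟙 B) (D.comp (D.conv (D.gr f)) β))
            (D.reidx (𝟙 B) g (D.gr g)) := by
      rw [← D.reidx_diag_right g]
      calc D.reidx f (𝟙 B) (D.comp (D.conv (D.gr f)) β)
          = D.comp (D.reidx f (𝟙 B) (D.comp (D.conv (D.gr f)) β)) (D.d B) :=
            (D.comp_d _).symm
        _ ≤ _ := D.comp_mono le_rfl (D.d_le_reidx g)
    have h4 : D.comp (D.reidx f (𝟙 B) (D.comp (D.conv (D.gr f)) β))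
        (D.reidx (𝟙 B) g (D.gr g))
        ≤ D.reidx f g (D.comp (D.comp (D.conv (D.gr f)) β) (D.gr g)) :=
      D.comp_reidx_le f (𝟙 B) g _ _
    exact le_trans h1 (le_trans h2 (le_trans h3 h4))
  constructor
  · intro α
    apply le_antisymm
    · -- reidx f g α ≤ gr f ; α ; gr g°
      have split : D.reidx f g α = D.reidx f (𝟙 B) (D.reidx (𝟙 X) g α) := by
        have := D.reidx_comp f (𝟙 X) (𝟙 B) g α
        simpa using this
      have c2 : D.reidx (𝟙 X) g α ≤ D.comp α (D.conv (D.gr g)) := by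
        have h : D.reidx (𝟙 X) g α
            ≤ D.comp (D.reidx (𝟙 X) g α) (D.reidx g (𝟙 B) (D.conv (D.gr g))) := by
          rw [← D.reidx_diag_left g]
          calc D.reidx (𝟙 X) g α = D.comp (D.reidx (𝟙 X) g α) (D.d B) :=
                (D.comp_d _).symm
            _ ≤ _ := D.comp_mono le_rfl (D.d_le_reidx g)
        have h' := D.comp_reidx_le (𝟙 X) g (𝟙 B) α (D.conv (D.gr g))
        rw [D.reidx_id] at h'
        exact le_trans h h'
      have c1 : ∀ γ : P X B, D.reidx f (𝟙 B) γ ≤ D.comp (D.gr f) γ := by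
        intro γ
        have h : D.reidx f (𝟙 B) γ
            ≤ D.comp (D.reidx (𝟙 A) f (D.gr f)) (D.reidx f (𝟙 B) γ) := by
          rw [← D.reidx_diag_right f]
          calc D.reidx f (𝟙 B) γ = D.comp (D.d A) (D.reidx f (𝟙 B) γ) :=
                (D.d_comp _).symm
            _ ≤ _ := D.comp_mono (D.d_le_reidx f) le_rfl
        have h' := D.comp_reidx_le (𝟙 A) f (𝟙 B) (D.gr f) γ
        rw [D.reidx_id] at h'
        exact le_trans h h'
      calc D.reidx f g α = D.reidx f (𝟙 B) (D.reidx (𝟙 X) g α) := split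
        _ ≤ D.comp (D.gr f) (D.reidx (𝟙 X) g α) := c1 _
        _ ≤ D.comp (D.gr f) (D.comp α (D.conv (D.gr g))) := D.comp_mono le_rfl c2
        _ = D.comp (D.comp (D.gr f) α) (D.conv (D.gr g)) := D.comp_assoc _ _ _
    · -- gr f ; α ; gr g° ≤ reidx f g α
      have h1 : D.comp α (D.conv (D.gr g)) ≤ D.reidx (𝟙 X) g α := by
        rw [D.conv_gr' g]
        have := D.comp_reidx_le (𝟙 X) (𝟙 Y) g α (D.d Y)
        rwa [D.reidx_id, D.comp_d] at this
      have h2 : D.comp (D.gr f) (D.reidx (𝟙 X) g α) ≤ D.reidx f g α := by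
        have := D.comp_reidx_le f (𝟙 X) g (D.d X) α
        rwa [D.d_comp] at this
      calc D.comp (D.comp (D.gr f) α) (D.conv (D.gr g))
          = D.comp (D.gr f) (D.comp α (D.conv (D.gr g))) := (D.comp_assoc _ _ _).symm
        _ ≤ D.comp (D.gr f) (D.reidx (𝟙 X) g α) := D.comp_mono le_rfl h1
        _ ≤ D.reidx f g α := h2
  · intro β α
    constructor
    · intro h
      calc D.comp (D.comp (D.conv (D.gr f)) β) (D.gr g)
          ≤ D.comp (D.comp (D.conv (D.gr f)) (D.reidx f g α)) (D.gr g) :=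
            D.comp_mono (D.comp_mono le_rfl h) le_rfl
        _ ≤ α := counit α
    · intro h
      exact le_trans (unit β) (D.reidx_mono f g h)
end

section
/- Let R be a relational doctrine with quotients on a category C. For every commutative square i ∘ f = g ∘ q in C, where q : X → W is a quotient arrow (of some R-equivalence relation) and i : Y → Z is an injective arrow, there exists a unique arrow h : W → Y such that h ∘ q = f and i ∘ h = g. -/
open CategoryTheory

universe w w' v v' u u'

variable {C : Type u} [Category.{v} C] {P : C → C → Type w} [∀ X Y : C, PartialOrder (P X Y)]

namespace RelDoctrine

variable (D : RelDoctrine C P)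

lemma conv_gr_eq {X Y : C} (f : X ⟶ Y) :
    D.conv (D.gr f) = D.reidx (𝟙 Y) f (D.d Y) := by
  apply le_antisymm
  · have := D.conv_reidx_le f (𝟙 Y) (D.d Y)
    rw [D.conv_d] at this
    exact this
  · have h := D.conv_reidx_le (𝟙 Y) f (D.d Y)
    rw [D.conv_d] at h
    have h2 := D.conv_mono h
    rw [D.conv_conv] at h2
    exact h2

lemma reidx_gr_left {X Y : C} (f : X ⟶ Y) :
    D.reidx (𝟙 X) f (D.gr f) = D.reidx f f (D.d Y) := by
  rw [gr, ← D.reidx_comp, Category.id_comp, Category.comp_id]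

lemma reidx_gr_right {X Y : C} (f : X ⟶ Y) :
    D.reidx f (𝟙 X) (D.conv (D.gr f)) = D.reidx f f (D.d Y) := by
  rw [conv_gr_eq, ← D.reidx_comp, Category.comp_id, Category.id_comp]

/-- Strictness: the kernel-pair relation is below the relational kernel. -/
lemma reidx_d_le_kernel {X Y : C} (f : X ⟶ Y) :
    D.reidx f f (D.d Y) ≤ D.kernelOf f := by
  have h3 := D.comp_reidx_le (𝟙 X) f (𝟙 X) (D.gr f) (D.conv (D.gr f))
  rw [D.reidx_gr_left, D.reidx_gr_right, D.reidx_id] at h3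
  refine le_trans ?_ h3
  calc D.reidx f f (D.d Y)
      = D.comp (D.d X) (D.reidx f f (D.d Y)) := (D.d_comp _).symm
    _ ≤ D.comp (D.reidx f f (D.d Y)) (D.reidx f f (D.d Y)) :=
        D.comp_mono (D.d_le_reidx f) le_rfl

/-- Graphs are total. -/
lemma gr_total {X Y : C} (f : X ⟶ Y) :
    D.d X ≤ D.comp (D.gr f) (D.conv (D.gr f)) :=
  le_trans (D.d_le_reidx f) (D.reidx_d_le_kernel f)

/-- Graphs laxly preserve composition. -/
lemma gr_comp_le {X Y Z : C} (u : X ⟶ Y) (v : Y ⟶ Z) :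
    D.comp (D.gr u) (D.gr v) ≤ D.gr (u ≫ v) := by
  have hg : D.gr (u ≫ v) = D.reidx u (𝟙 Z) (D.gr v) := by
    rw [gr, gr, ← D.reidx_comp, Category.comp_id]
  rw [hg]
  have h := D.comp_reidx_le u (𝟙 Y) (𝟙 Z) (D.d Y) (D.gr v)
  rw [D.reidx_id, D.d_comp] at h
  exact h

/-- Kernels grow along postcomposition. -/
lemma kernel_le_kernel_comp {X Y Z : C} (u : X ⟶ Y) (v : Y ⟶ Z) :
    D.kernelOf u ≤ D.kernelOf (u ≫ v) := by
  have h1 : D.kernelOf u ≤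
      D.comp (D.comp (D.gr u) (D.gr v)) (D.conv (D.comp (D.gr u) (D.gr v))) := by
    rw [D.conv_comp, D.comp_assoc, ← D.comp_assoc (D.gr u)]
    calc D.kernelOf u
        = D.comp (D.gr u) (D.conv (D.gr u)) := rfl
      _ = D.comp (D.gr u) (D.comp (D.d Y) (D.conv (D.gr u))) := by rw [D.d_comp]
      _ ≤ D.comp (D.gr u)
            (D.comp (D.comp (D.gr v) (D.conv (D.gr v))) (D.conv (D.gr u))) :=
          D.comp_mono le_rfl (D.comp_mono (D.gr_total v) le_rfl)
      _ = D.comp (D.comp (D.gr u) (D.comp (D.gr v) (D.conv (D.gr v))))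
            (D.conv (D.gr u)) := D.comp_assoc _ _ _
  refine le_trans h1 (D.comp_mono (D.gr_comp_le u v) (D.conv_mono (D.gr_comp_le u v)))

/-- Postcomposing with an injective arrow does not grow the kernel. -/
lemma kernel_comp_inj_le {X Y Z : C} (f : X ⟶ Y) (i : Y ⟶ Z)
    (hi : D.InjectiveRel (D.gr i)) :
    D.kernelOf (f ≫ i) ≤ D.kernelOf f := by
  have hg : D.gr (f ≫ i) = D.reidx f (𝟙 Z) (D.gr i) := by
    rw [gr, gr, ← D.reidx_comp, Category.comp_id]
  have hc : D.conv (D.gr (f ≫ i)) ≤ D.reidx (𝟙 Z) f (D.conv (D.gr i)) := by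
    rw [hg]; exact D.conv_reidx_le f (𝟙 Z) (D.gr i)
  have h1 : D.kernelOf (f ≫ i) ≤
      D.comp (D.reidx f (𝟙 Z) (D.gr i)) (D.reidx (𝟙 Z) f (D.conv (D.gr i))) := by
    unfold kernelOf
    rw [hg] at hc ⊢
    exact D.comp_mono le_rfl hc
  refine le_trans h1 ?_
  refine le_trans (D.comp_reidx_le f (𝟙 Z) f (D.gr i) (D.conv (D.gr i))) ?_
  refine le_trans (D.reidx_mono f f hi) (D.reidx_d_le_kernel f)

end RelDoctrine

/-- Quotient arrows are orthogonal to injective arrows. -/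
theorem statement3 (D : RelDoctrine C P) (hquot : D.HasQuotients)
    {X W Y Z : C} (q : X ⟶ W) (ρ : P X X) (hρ : D.IsEquivRel ρ)
    (hq : D.IsQuotientArrow ρ q) (i : Y ⟶ Z) (hi : D.InjectiveRel (D.gr i))
    (f : X ⟶ Y) (g : W ⟶ Z) (hcomm : f ≫ i = q ≫ g) :
    ∃! h : W ⟶ Y, q ≫ h = f ∧ h ≫ i = g := by
  -- ρ is below the kernel of q ≫ g = f ≫ i
  have hρqg : ρ ≤ D.kernelOf (q ≫ g) :=
    le_trans hq.1 (D.kernel_le_kernel_comp q g)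
  have hρfi : ρ ≤ D.kernelOf (f ≫ i) := by rw [hcomm]; exact hρqg
  have hρf : ρ ≤ D.kernelOf f :=
    le_trans hρfi (D.kernel_comp_inj_le f i hi)
  -- factor f through q
  obtain ⟨h, hh, huniq⟩ := hq.2 Y f hρf
  -- q is "epi" relative to arrows with big enough kernel
  obtain ⟨k, hk, hkuniq⟩ := hq.2 Z (q ≫ g) hρqg
  have hg : g = k := hkuniq g rfl
  have hhi : h ≫ i = k := by
    apply hkuniq
    rw [← Category.assoc, ← hh, hcomm]
  refine ⟨h, ⟨hh.symm, by rw [hhi, ← hg]⟩, ?_⟩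
  rintro h' ⟨hh', -⟩
  exact huniq h' hh'.symm
end

section
/- Let R be a relational doctrine with quotients on a category C. Then every arrow f : X → Y of C factors as f = i ∘ q where q is a quotient arrow (namely an effective descent quotient arrow of the kernel gr(f) ; gr(f)°) and i is an injective arrow. -/
open CategoryTheory

universe w w' v v' u u'

variable {C : Type u} [Category.{v} C] {P : C → C → Type w} [∀ X Y : C, PartialOrder (P X Y)]

namespace RelDoctrineAux

variable (D : RelDoctrine C P)

lemma gr_fun {X Y : C} (f : X ⟶ Y) :
    D.comp (D.conv (D.gr f)) (D.gr f) ≤ D.d Y := by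
  have h1 : D.conv (D.gr f) ≤ D.reidx (𝟙 Y) f (D.d Y) := by
    have := D.conv_reidx_le f (𝟙 Y) (D.d Y)
    rwa [D.conv_d] at this
  calc D.comp (D.conv (D.gr f)) (D.gr f)
      ≤ D.comp (D.reidx (𝟙 Y) f (D.d Y)) (D.reidx f (𝟙 Y) (D.d Y)) :=
        D.comp_mono h1 le_rfl
    _ ≤ D.reidx (𝟙 Y) (𝟙 Y) (D.comp (D.d Y) (D.d Y)) := D.comp_reidx_le _ _ _ _ _
    _ = D.d Y := by rw [D.d_comp, D.reidx_id]

lemma reidx_ff {X Y : C} (f : X ⟶ Y) :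
    D.reidx f f (D.d Y) = D.reidx (𝟙 X) f (D.gr f) := by
  rw [RelDoctrine.gr, ← D.reidx_comp, Category.id_comp, Category.comp_id]

lemma reidx_le {X Y B : C} (f : X ⟶ Y) (α : P Y B) :
    D.reidx f (𝟙 B) α ≤ D.comp (D.gr f) α := by
  have h0 : D.d X ≤ D.reidx (𝟙 X) f (D.gr f) := by
    have := D.d_le_reidx f
    rwa [reidx_ff] at this
  calc D.reidx f (𝟙 B) α = D.comp (D.d X) (D.reidx f (𝟙 B) α) := (D.d_comp _).symm
    _ ≤ D.comp (D.reidx (𝟙 X) f (D.gr f)) (D.reidx f (𝟙 B) α) := D.comp_mono h0 le_rfl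
    _ ≤ D.reidx (𝟙 X) (𝟙 B) (D.comp (D.gr f) α) := D.comp_reidx_le _ _ _ _ _
    _ = D.comp (D.gr f) α := D.reidx_id _

lemma gr_total {X Y : C} (f : X ⟶ Y) :
    D.d X ≤ D.comp (D.gr f) (D.conv (D.gr f)) := by
  have h1 : D.reidx (𝟙 Y) f (D.d Y) ≤ D.conv (D.gr f) := by
    have h := D.conv_reidx_le (𝟙 Y) f (D.d Y)
    rw [D.conv_d] at h
    have := D.conv_mono h
    rwa [D.conv_conv] at this
  have h2 : D.reidx f f (D.d Y) = D.reidx f (𝟙 X) (D.reidx (𝟙 Y) f (D.d Y)) := by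
    rw [← D.reidx_comp, Category.comp_id, Category.id_comp]
  calc D.d X ≤ D.reidx f f (D.d Y) := D.d_le_reidx f
    _ = D.reidx f (𝟙 X) (D.reidx (𝟙 Y) f (D.d Y)) := h2
    _ ≤ D.comp (D.gr f) (D.reidx (𝟙 Y) f (D.d Y)) := reidx_le D f _
    _ ≤ D.comp (D.gr f) (D.conv (D.gr f)) := D.comp_mono le_rfl h1

lemma gr_comp_le {X W Y : C} (q : X ⟶ W) (i : W ⟶ Y) :
    D.comp (D.gr q) (D.gr i) ≤ D.gr (q ≫ i) := by
  have h1 : D.gr i = D.reidx (𝟙 W) (𝟙 Y) (D.gr i) := (D.reidx_id _).symm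
  calc D.comp (D.gr q) (D.gr i)
      = D.comp (D.reidx q (𝟙 W) (D.d W)) (D.reidx (𝟙 W) (𝟙 Y) (D.gr i)) := by
        rw [← h1]; rfl
    _ ≤ D.reidx q (𝟙 Y) (D.comp (D.d W) (D.gr i)) := D.comp_reidx_le _ _ _ _ _
    _ = D.reidx q (𝟙 Y) (D.reidx i (𝟙 Y) (D.d Y)) := by rw [D.d_comp]; rfl
    _ = D.gr (q ≫ i) := by
        rw [← D.reidx_comp]
        simp [RelDoctrine.gr]

lemma kernel_equiv {X Y : C} (f : X ⟶ Y) : D.IsEquivRel (D.kernelOf f) := by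
  refine ⟨gr_total D f, ?_, ?_⟩
  · rw [RelDoctrine.kernelOf, D.conv_comp, D.conv_conv]
  · rw [RelDoctrine.kernelOf]
    calc D.comp (D.comp (D.gr f) (D.conv (D.gr f))) (D.comp (D.gr f) (D.conv (D.gr f)))
        = D.comp (D.gr f) (D.comp (D.comp (D.conv (D.gr f)) (D.gr f)) (D.conv (D.gr f))) := by
          simp only [D.comp_assoc]
      _ ≤ D.comp (D.gr f) (D.comp (D.d Y) (D.conv (D.gr f))) :=
          D.comp_mono le_rfl (D.comp_mono (gr_fun D f) le_rfl)
      _ = D.comp (D.gr f) (D.conv (D.gr f)) := by rw [D.d_comp]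

end RelDoctrineAux

open RelDoctrineAux in
/-- Every arrow factors as a quotient arrow of its kernel followed by an injective arrow. -/
theorem statement4 (D : RelDoctrine C P) (hquot : D.HasQuotients) {X Y : C} (f : X ⟶ Y) :
    ∃ (W : C) (q : X ⟶ W) (i : W ⟶ Y),
      f = q ≫ i ∧ D.IsQuotientArrow (D.kernelOf f) q ∧ D.Effective (D.kernelOf f) q ∧
        D.Descent q ∧ D.InjectiveRel (D.gr i) := by
  obtain ⟨W, q, hq, heff, hdesc⟩ := hquot X (D.kernelOf f) (kernel_equiv D f)
  obtain ⟨i, hi, -⟩ := hq.2 Y f le_rfl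
  refine ⟨W, q, i, hi, hq, heff, hdesc, ?_⟩
  set A := D.gr q with hA
  set B := D.gr i with hB
  have hfunA : D.comp (D.conv A) A ≤ D.d W := gr_fun D q
  have hqi : D.comp A B ≤ D.gr f := by
    rw [hi]; exact gr_comp_le D q i
  -- ((A;B);B°);A° ≤ A;A°
  have hkey : D.comp (D.comp (D.comp A B) (D.conv B)) (D.conv A) ≤ D.comp A (D.conv A) := by
    have h1 : D.comp (D.comp (D.comp A B) (D.conv B)) (D.conv A)
        = D.comp (D.comp A B) (D.conv (D.comp A B)) := by
      rw [D.conv_comp, D.comp_assoc]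
    rw [h1]
    calc D.comp (D.comp A B) (D.conv (D.comp A B))
        ≤ D.comp (D.gr f) (D.conv (D.gr f)) := D.comp_mono hqi (D.conv_mono hqi)
      _ = D.comp A (D.conv A) := by
          have : D.kernelOf f = D.kernelOf q := heff
          simpa [RelDoctrine.kernelOf] using this
  have hdes : D.d W ≤ D.comp (D.conv A) A := hdesc
  calc D.comp B (D.conv B)
      = D.comp (D.comp (D.d W) (D.comp B (D.conv B))) (D.d W) := by
        rw [D.d_comp, D.comp_d]
    _ ≤ D.comp (D.comp (D.comp (D.conv A) A) (D.comp B (D.conv B))) (D.comp (D.conv A) A) :=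
        D.comp_mono (D.comp_mono hdes le_rfl) hdes
    _ = D.comp (D.comp (D.conv A) (D.comp (D.comp (D.comp A B) (D.conv B)) (D.conv A))) A := by
        simp only [D.comp_assoc]
    _ ≤ D.comp (D.comp (D.conv A) (D.comp A (D.conv A))) A :=
        D.comp_mono (D.comp_mono le_rfl hkey) le_rfl
    _ = D.comp (D.comp (D.conv A) A) (D.comp (D.conv A) A) := by
        simp only [D.comp_assoc]
    _ ≤ D.comp (D.d W) (D.d W) := D.comp_mono hfunA hfunA
    _ = D.d W := D.d_comp _
end

section
/- Let R be a relational doctrine with quotients on a category C. Then all objects of C are R-projective if and only if every quotient arrow of C is a split epimorphism (i.e. admits a section). -/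
open CategoryTheory

universe w w' v v' u u'

variable {C : Type u} [Category.{v} C] {P : C → C → Type w} [∀ X Y : C, PartialOrder (P X Y)]

/-- All objects are projective iff every quotient arrow splits. -/
theorem statement12 (D : RelDoctrine C P) (hquot : D.HasQuotients) :
    (∀ X : C, D.ProjectiveObj X) ↔
      (∀ (X W : C) (ρ : P X X) (q : X ⟶ W), D.IsEquivRel ρ → D.IsQuotientArrow ρ q →
        ∃ s : W ⟶ X, s ≫ q = 𝟙 W) := by
  constructor
  · intro hproj X W ρ q hρ hq
    obtain ⟨s, hs⟩ := hproj W X W (𝟙 W) q ρ hρ hq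
    exact ⟨s, hs.symm⟩
  · intro hsplit Q X Y f q ρ hρ hq
    obtain ⟨s, hs⟩ := hsplit X Y ρ q hρ hq
    exact ⟨f ≫ s, by rw [Category.assoc, hs, Category.comp_id]⟩
end

section
/- Let R be an extensional relational doctrine on a category C. Then an arrow q : X → Y of C is a split epimorphism which is an effective descent quotient arrow (of its kernel gr(q) ; gr(q)°) if and only if q is a split epimorphism and surjective. -/
open CategoryTheory

universe w w' v v' u u'

variable {C : Type u} [Category.{v} C] {P : C → C → Type w} [∀ X Y : C, PartialOrder (P X Y)]


theorem RelDoctrine.conv_reidx (D : RelDoctrine C P) {A X B Y : C} (f : A ⟶ X) (g : B ⟶ Y)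
    (α : P X Y) : D.conv (D.reidx f g α) = D.reidx g f (D.conv α) := by
  apply le_antisymm (D.conv_reidx_le f g α)
  have h := D.conv_mono (D.conv_reidx_le g f (D.conv α))
  simp only [D.conv_conv] at h
  exact h

/-- In an extensional relational doctrine, split effective descent quotient arrows are
exactly the split surjective arrows. -/
theorem statement13 (D : RelDoctrine C P) (hext : D.Extensional) {X Y : C} (q : X ⟶ Y) :
    ((∃ s : Y ⟶ X, s ≫ q = 𝟙 Y) ∧ D.IsQuotientArrow (D.kernelOf q) q ∧
        D.Effective (D.kernelOf q) q ∧ D.Descent q) ↔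
      ((∃ s : Y ⟶ X, s ≫ q = 𝟙 Y) ∧ D.SurjectiveRel (D.gr q)) := by
  constructor
  · rintro ⟨hs, -, -, hdes⟩
    exact ⟨hs, hdes⟩
  · rintro ⟨⟨s, hs⟩, hsurj⟩
    refine ⟨⟨s, hs⟩, ⟨le_refl _, ?_⟩, rfl, hsurj⟩
    intro Z f hker
    have hgq : (q ≫ s) ≫ q = q := by rw [Category.assoc, hs, Category.comp_id]
    refine ⟨s ≫ f, ?_, ?_⟩
    · apply hext
      have hconv : D.conv (D.gr q) = D.reidx (𝟙 Y) q (D.d Y) := by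
        rw [RelDoctrine.gr, D.conv_reidx, D.conv_d]
      have e1 : D.reidx (𝟙 X) q (D.gr q) = D.reidx q q (D.d Y) := by
        rw [RelDoctrine.gr, ← D.reidx_comp, Category.id_comp, Category.comp_id]
      have e2 : D.reidx q (q ≫ s) (D.conv (D.gr q)) = D.reidx q q (D.d Y) := by
        rw [hconv, ← D.reidx_comp, Category.comp_id, hgq]
      have e3 : D.reidx (𝟙 X) (q ≫ s) (D.reidx f f (D.d Z)) =
          D.reidx f ((q ≫ s) ≫ f) (D.d Z) := by
        rw [← D.reidx_comp, Category.id_comp]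
      have hcg : D.conv (D.gr f) = D.reidx (𝟙 Z) f (D.d Z) := by
        rw [RelDoctrine.gr, D.conv_reidx, D.conv_d]
      have kf : D.kernelOf f ≤ D.reidx f f (D.d Z) := by
        have h2 := D.comp_reidx_le f (𝟙 Z) f (D.d Z) (D.d Z)
        rw [D.d_comp] at h2
        rw [RelDoctrine.kernelOf, hcg, RelDoctrine.gr]
        exact h2
      show D.d X ≤ D.reidx f (q ≫ (s ≫ f)) (D.d Z)
      calc D.d X = D.comp (D.d X) (D.d X) := (D.d_comp _).symm
        _ ≤ D.comp (D.reidx q q (D.d Y)) (D.reidx q q (D.d Y)) :=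
            D.comp_mono (D.d_le_reidx q) (D.d_le_reidx q)
        _ = D.comp (D.reidx (𝟙 X) q (D.gr q)) (D.reidx q (q ≫ s) (D.conv (D.gr q))) := by
            rw [e1, e2]
        _ ≤ D.reidx (𝟙 X) (q ≫ s) (D.comp (D.gr q) (D.conv (D.gr q))) :=
            D.comp_reidx_le _ _ _ _ _
        _ ≤ D.reidx (𝟙 X) (q ≫ s) (D.kernelOf f) := D.reidx_mono _ _ hker
        _ ≤ D.reidx (𝟙 X) (q ≫ s) (D.reidx f f (D.d Z)) := D.reidx_mono _ _ kf
        _ = D.reidx f ((q ≫ s) ≫ f) (D.d Z) := e3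
        _ = D.reidx f (q ≫ (s ≫ f)) (D.d Z) := by rw [Category.assoc]
    · intro h' hh'
      rw [hh', ← Category.assoc, hs, Category.id_comp]
end

section
/- Let R be an extensional relational doctrine with quotients on a category C. Then R is balanced and all objects of C are R-projective if and only if every surjective arrow of C is a split epimorphism. -/
open CategoryTheory

universe w w' v v' u u'

variable {C : Type u} [Category.{v} C] {P : C → C → Type w} [∀ X Y : C, PartialOrder (P X Y)]

section Aux

variable (D : RelDoctrine C P)

theorem aux_conv_reidx {X A Y B : C} (f : X ⟶ A) (g : Y ⟶ B) (α : P A B) :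
    D.conv (D.reidx f g α) = D.reidx g f (D.conv α) := by
  apply le_antisymm (D.conv_reidx_le f g α)
  have h := D.conv_reidx_le g f (D.conv α)
  rw [D.conv_conv] at h
  have h2 := D.conv_mono h
  rwa [D.conv_conv] at h2

theorem aux_gr_id (X : C) : D.gr (𝟙 X) = D.d X := by
  simp [RelDoctrine.gr, D.reidx_id]

theorem aux_conv_gr {X Y : C} (f : X ⟶ Y) :
    D.conv (D.gr f) = D.reidx (𝟙 Y) f (D.d Y) := by
  rw [RelDoctrine.gr, aux_conv_reidx, D.conv_d]

theorem aux_reidx_eq {X A Y B : C} (f : X ⟶ A) (g : Y ⟶ B) (α : P A B) :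
    D.reidx f g α = D.comp (D.comp (D.gr f) α) (D.conv (D.gr g)) := by
  apply le_antisymm
  · -- reidx f g α ≤ gr f ; α ; (gr g)°
    have hX : D.d X ≤ D.reidx (𝟙 X) f (D.gr f) := by
      have e : D.reidx (𝟙 X) f (D.gr f) = D.reidx f f (D.d A) := by
        rw [RelDoctrine.gr, ← D.reidx_comp (𝟙 X) f f (𝟙 A) (D.d A)]
        simp
      rw [e]; exact D.d_le_reidx f
    have hY : D.d Y ≤ D.reidx g (𝟙 Y) (D.conv (D.gr g)) := by
      have e : D.reidx g (𝟙 Y) (D.conv (D.gr g)) = D.reidx g g (D.d B) := by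
        rw [aux_conv_gr, ← D.reidx_comp g (𝟙 B) (𝟙 Y) g (D.d B)]
        simp
      rw [e]; exact D.d_le_reidx g
    calc D.reidx f g α = D.comp (D.d X) (D.reidx f g α) := (D.d_comp _).symm
      _ ≤ D.comp (D.reidx (𝟙 X) f (D.gr f)) (D.reidx f g α) :=
          D.comp_mono hX le_rfl
      _ ≤ D.reidx (𝟙 X) g (D.comp (D.gr f) α) := D.comp_reidx_le (𝟙 X) f g (D.gr f) α
      _ = D.comp (D.reidx (𝟙 X) g (D.comp (D.gr f) α)) (D.d Y) := (D.comp_d _).symm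
      _ ≤ D.comp (D.reidx (𝟙 X) g (D.comp (D.gr f) α))
            (D.reidx g (𝟙 Y) (D.conv (D.gr g))) := D.comp_mono le_rfl hY
      _ ≤ D.reidx (𝟙 X) (𝟙 Y) (D.comp (D.comp (D.gr f) α) (D.conv (D.gr g))) :=
          D.comp_reidx_le (𝟙 X) g (𝟙 Y) _ _
      _ = D.comp (D.comp (D.gr f) α) (D.conv (D.gr g)) := D.reidx_id _
  · -- gr f ; α ; (gr g)° ≤ reidx f g α
    have e1 : D.comp (D.gr f) α ≤ D.reidx f (𝟙 B) α := by
      have h := D.comp_reidx_le f (𝟙 A) (𝟙 B) (D.d A) α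
      rwa [D.reidx_id, D.d_comp] at h
    calc D.comp (D.comp (D.gr f) α) (D.conv (D.gr g))
        ≤ D.comp (D.reidx f (𝟙 B) α) (D.reidx (𝟙 B) g (D.d B)) := by
          rw [aux_conv_gr]; exact D.comp_mono e1 le_rfl
      _ ≤ D.reidx f g (D.comp α (D.d B)) := D.comp_reidx_le f (𝟙 B) g α (D.d B)
      _ = D.reidx f g α := by rw [D.comp_d]

theorem aux_reidx_d {X Y : C} (f g : X ⟶ Y) :
    D.reidx f g (D.d Y) = D.comp (D.gr f) (D.conv (D.gr g)) := by
  rw [aux_reidx_eq, D.comp_d]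

theorem aux_gr_comp {X Y Z : C} (f : X ⟶ Y) (g : Y ⟶ Z) :
    D.gr (f ≫ g) = D.comp (D.gr f) (D.gr g) := by
  have e : D.gr (f ≫ g) = D.reidx f (𝟙 Z) (D.gr g) := by
    rw [RelDoctrine.gr, RelDoctrine.gr, ← D.reidx_comp f g (𝟙 Z) (𝟙 Z) (D.d Z)]
    simp
  rw [e, aux_reidx_eq, aux_gr_id, D.conv_d, D.comp_d]

theorem aux_gr_functional {X Y : C} (f : X ⟶ Y) :
    D.comp (D.conv (D.gr f)) (D.gr f) ≤ D.d Y := by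
  have h := D.comp_reidx_le (𝟙 Y) f (𝟙 Y) (D.d Y) (D.d Y)
  rw [D.reidx_id, D.d_comp] at h
  rw [aux_conv_gr]
  exact h

theorem aux_gr_total {X Y : C} (f : X ⟶ Y) :
    D.d X ≤ D.comp (D.gr f) (D.conv (D.gr f)) := by
  have h := D.d_le_reidx f
  rwa [aux_reidx_d] at h

/-- If `j ≫ i = 𝟙` then `gr j ≤ (gr i)°`. -/
theorem aux_conv_ge {Y W : C} (j : Y ⟶ W) (i : W ⟶ Y) (h : j ≫ i = 𝟙 Y) :
    D.gr j ≤ D.conv (D.gr i) := by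
  calc D.gr j = D.comp (D.gr j) (D.d W) := (D.comp_d _).symm
    _ ≤ D.comp (D.gr j) (D.comp (D.gr i) (D.conv (D.gr i))) :=
        D.comp_mono le_rfl (aux_gr_total D i)
    _ = D.comp (D.comp (D.gr j) (D.gr i)) (D.conv (D.gr i)) := D.comp_assoc _ _ _
    _ = D.comp (D.d Y) (D.conv (D.gr i)) := by rw [← aux_gr_comp, h, aux_gr_id]
    _ = D.conv (D.gr i) := D.d_comp _

/-- If `a` is functional and descent-like, and `a ; b` is surjective, then `b` is surjective. -/
theorem aux_surj {X W Y : C} (a : P X W) (b : P W Y)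
    (hfun : D.comp (D.conv a) a ≤ D.d W)
    (hs : D.d Y ≤ D.comp (D.conv (D.comp a b)) (D.comp a b)) :
    D.d Y ≤ D.comp (D.conv b) b := by
  calc D.d Y ≤ D.comp (D.conv (D.comp a b)) (D.comp a b) := hs
    _ = D.comp (D.conv b) (D.comp (D.comp (D.conv a) a) b) := by
        rw [D.conv_comp, D.comp_assoc, D.comp_assoc, D.comp_assoc]
    _ ≤ D.comp (D.conv b) (D.comp (D.d W) b) :=
        D.comp_mono le_rfl (D.comp_mono hfun le_rfl)
    _ = D.comp (D.conv b) b := by rw [D.d_comp]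

/-- If `a` is descent and functional, and the kernel of `a ; b` equals that of `a`,
then `b` is injective. -/
theorem aux_inj {X W Y : C} (a : P X W) (b : P W Y)
    (hdesc : D.d W ≤ D.comp (D.conv a) a)
    (hfun : D.comp (D.conv a) a ≤ D.d W)
    (heff : D.comp (D.comp a b) (D.conv (D.comp a b)) = D.comp a (D.conv a)) :
    D.comp b (D.conv b) ≤ D.d W := by
  have hb : b ≤ D.comp (D.conv a) (D.comp a b) := by
    calc b = D.comp (D.d W) b := (D.d_comp _).symm
      _ ≤ D.comp (D.comp (D.conv a) a) b := D.comp_mono hdesc le_rfl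
      _ = D.comp (D.conv a) (D.comp a b) := (D.comp_assoc _ _ _).symm
  have hb' : D.conv b ≤ D.comp (D.conv (D.comp a b)) a := by
    have h := D.conv_mono hb
    rwa [D.conv_comp, D.conv_conv] at h
  calc D.comp b (D.conv b)
      ≤ D.comp (D.comp (D.conv a) (D.comp a b)) (D.comp (D.conv (D.comp a b)) a) :=
        D.comp_mono hb hb'
    _ = D.comp (D.comp (D.conv a) (D.comp (D.comp a b) (D.conv (D.comp a b)))) a := by
        simp only [D.comp_assoc]
    _ = D.comp (D.comp (D.conv a) (D.comp a (D.conv a))) a := by rw [heff]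
    _ = D.comp (D.comp (D.conv a) a) (D.comp (D.conv a) a) := by
        rw [D.comp_assoc, D.comp_assoc]
    _ ≤ D.comp (D.d W) (D.d W) := D.comp_mono hfun hfun
    _ = D.d W := D.d_comp _

/-- The kernel of any arrow is an equivalence relation. -/
theorem aux_kernel_equiv {X Y : C} (f : X ⟶ Y) : D.IsEquivRel (D.kernelOf f) := by
  refine ⟨aux_gr_total D f, ?_, ?_⟩
  · rw [RelDoctrine.kernelOf, D.conv_comp, D.conv_conv]
  · rw [RelDoctrine.kernelOf]
    calc D.comp (D.comp (D.gr f) (D.conv (D.gr f))) (D.comp (D.gr f) (D.conv (D.gr f)))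
        = D.comp (D.comp (D.gr f) (D.comp (D.conv (D.gr f)) (D.gr f))) (D.conv (D.gr f)) := by
          simp only [D.comp_assoc]
      _ ≤ D.comp (D.comp (D.gr f) (D.d Y)) (D.conv (D.gr f)) :=
          D.comp_mono (D.comp_mono le_rfl (aux_gr_functional D f)) le_rfl
      _ = D.comp (D.gr f) (D.conv (D.gr f)) := by rw [D.comp_d]

/-- Any quotient arrow is surjective (given `HasQuotients`). -/
theorem aux_quot_surj (hquot : D.HasQuotients) {X Y : C} (ρ : P X X) (q : X ⟶ Y)
    (hρ : D.IsEquivRel ρ) (hq : D.IsQuotientArrow ρ q) :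
    D.SurjectiveRel (D.gr q) := by
  obtain ⟨W, q', hq', heff', hdesc'⟩ := hquot X ρ hρ
  obtain ⟨i, hi, -⟩ := hq'.2 Y q hq.1
  obtain ⟨j, hj, -⟩ := hq.2 W q' hq'.1
  have hji : j ≫ i = 𝟙 Y := by
    obtain ⟨u, -, hu⟩ := hq.2 Y q hq.1
    have h1 : j ≫ i = u := hu (j ≫ i) (by show q = q ≫ (j ≫ i); rw [← Category.assoc, ← hj]; exact hi)
    have h2 : 𝟙 Y = u := hu (𝟙 Y) (by simp)
    rw [h1, ← h2]
  have hii : D.d Y ≤ D.comp (D.conv (D.gr i)) (D.gr i) := by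
    calc D.d Y = D.gr (𝟙 Y) := (aux_gr_id D Y).symm
      _ = D.comp (D.gr j) (D.gr i) := by rw [← hji, aux_gr_comp]
      _ ≤ D.comp (D.conv (D.gr i)) (D.gr i) :=
          D.comp_mono (aux_conv_ge D j i hji) le_rfl
  rw [RelDoctrine.SurjectiveRel, hi, aux_gr_comp, D.conv_comp]
  calc D.d Y ≤ D.comp (D.conv (D.gr i)) (D.gr i) := hii
    _ = D.comp (D.conv (D.gr i)) (D.comp (D.d W) (D.gr i)) := by rw [D.d_comp]
    _ ≤ D.comp (D.conv (D.gr i)) (D.comp (D.comp (D.conv (D.gr q')) (D.gr q')) (D.gr i)) :=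
        D.comp_mono le_rfl (D.comp_mono hdesc' le_rfl)
    _ = D.comp (D.comp (D.conv (D.gr i)) (D.conv (D.gr q'))) (D.comp (D.gr q') (D.gr i)) := by
        rw [D.comp_assoc, D.comp_assoc, D.comp_assoc]

end Aux

/-- An extensional relational doctrine with quotients is balanced with all objects
projective iff every surjective arrow splits. -/
theorem statement14 (D : RelDoctrine C P) (hext : D.Extensional) (hquot : D.HasQuotients) :
    (D.BalancedDoc ∧ ∀ X : C, D.ProjectiveObj X) ↔
      (∀ (X Y : C) (f : X ⟶ Y), D.SurjectiveRel (D.gr f) → ∃ s : Y ⟶ X, s ≫ f = 𝟙 Y) := by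
  constructor
  · rintro ⟨hbal, hproj⟩ X Y f hsurj
    -- take the quotient of the kernel of f
    obtain ⟨W, q, hq, heff, hdesc⟩ := hquot X (D.kernelOf f) (aux_kernel_equiv D f)
    obtain ⟨h, hfqh, -⟩ := hq.2 Y f le_rfl
    -- h is bijective
    have hgr : D.gr f = D.comp (D.gr q) (D.gr h) := by rw [hfqh, aux_gr_comp]
    have heff' : D.comp (D.comp (D.gr q) (D.gr h)) (D.conv (D.comp (D.gr q) (D.gr h)))
        = D.comp (D.gr q) (D.conv (D.gr q)) := by
      rw [← hgr]
      exact heff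
    have hinj : D.InjectiveRel (D.gr h) :=
      aux_inj D (D.gr q) (D.gr h) hdesc (aux_gr_functional D q) heff'
    have hsurjh : D.SurjectiveRel (D.gr h) := by
      apply aux_surj D (D.gr q) (D.gr h) (aux_gr_functional D q)
      rw [← hgr]; exact hsurj
    have hiso : IsIso h := hbal W Y h hinj hsurjh
    -- use projectivity of Y to lift inv h along q
    obtain ⟨s, hs⟩ := hproj Y X W (inv h) q (D.kernelOf f) (aux_kernel_equiv D f) hq
    refine ⟨s, ?_⟩
    rw [hfqh, ← Category.assoc, ← hs, IsIso.inv_hom_id]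
  · intro hsplit
    constructor
    · -- balanced
      intro X Y f hinj hsurj
      obtain ⟨s, hsf⟩ := hsplit X Y f hsurj
      have hfs : f ≫ s = 𝟙 X := by
        apply hext
        rw [RelDoctrine.RExtEq, aux_reidx_d, aux_gr_id, D.conv_d, D.comp_d]
        have hle : D.conv (D.gr f) ≤ D.gr s := by
          calc D.conv (D.gr f) = D.comp (D.d Y) (D.conv (D.gr f)) := (D.d_comp _).symm
            _ = D.comp (D.comp (D.gr s) (D.gr f)) (D.conv (D.gr f)) := by
                rw [← aux_gr_comp, hsf, aux_gr_id]
            _ = D.comp (D.gr s) (D.comp (D.gr f) (D.conv (D.gr f))) :=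
                (D.comp_assoc _ _ _).symm
            _ ≤ D.comp (D.gr s) (D.d X) := D.comp_mono le_rfl hinj
            _ = D.gr s := D.comp_d _
        calc D.d X ≤ D.comp (D.gr f) (D.conv (D.gr f)) := aux_gr_total D f
          _ ≤ D.comp (D.gr f) (D.gr s) := D.comp_mono le_rfl hle
          _ = D.gr (f ≫ s) := (aux_gr_comp D f s).symm
      exact ⟨s, hfs, hsf⟩
    · -- all objects projective
      intro Q X Y f q ρ hρ hq
      have hqsurj := aux_quot_surj D hquot ρ q hρ hq
      obtain ⟨s, hs⟩ := hsplit X Y q hqsurj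
      refine ⟨f ≫ s, ?_⟩
      rw [Category.assoc, hs, Category.comp_id]
end

section
/- Let R be an extensional relational doctrine on a category C satisfying the rule of unique choice. Then for all objects X, Y of C the map f ↦ gr(f) is a bijection from the set of arrows X → Y in C onto the set of functional and total relations in R(X,Y). -/
open CategoryTheory

universe w w' v v' u u'

variable {C : Type u} [Category.{v} C] {P : C → C → Type w} [∀ X Y : C, PartialOrder (P X Y)]

lemma conv_gr (D : RelDoctrine C P) {X Y : C} (f : X ⟶ Y) :
    D.conv (D.gr f) = D.reidx (𝟙 Y) f (D.d Y) := by
  apply le_antisymm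
  · have h := D.conv_reidx_le f (𝟙 Y) (D.d Y)
    rwa [D.conv_d] at h
  · have h := D.conv_reidx_le (𝟙 Y) f (D.d Y)
    rw [D.conv_d] at h
    have h2 := D.conv_mono h
    rwa [D.conv_conv] at h2

lemma d_le_reidx_gr (D : RelDoctrine C P) {X Y : C} (f : X ⟶ Y) :
    D.d X ≤ D.reidx (𝟙 X) f (D.gr f) := by
  have h := D.d_le_reidx f
  have e : D.reidx f f (D.d Y) = D.reidx (𝟙 X) f (D.gr f) := by
    have := D.reidx_comp (𝟙 X) f f (𝟙 Y) (D.d Y)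
    simpa [RelDoctrine.gr] using this
  rwa [e] at h

lemma d_le_reidx_conv_gr (D : RelDoctrine C P) {X Y : C} (f : X ⟶ Y) :
    D.d X ≤ D.reidx f (𝟙 X) (D.conv (D.gr f)) := by
  have h := D.d_le_reidx f
  have e : D.reidx f f (D.d Y) = D.reidx f (𝟙 X) (D.conv (D.gr f)) := by
    have := D.reidx_comp f (𝟙 Y) (𝟙 X) f (D.d Y)
    rw [conv_gr]
    simpa using this
  rwa [e] at h

lemma gr_functional (D : RelDoctrine C P) {X Y : C} (f : X ⟶ Y) :
    D.Functional (D.gr f) := by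
  unfold RelDoctrine.Functional
  rw [conv_gr]
  have h := D.comp_reidx_le (𝟙 Y) f (𝟙 Y) (D.d Y) (D.d Y)
  calc D.comp (D.reidx (𝟙 Y) f (D.d Y)) (D.gr f)
      ≤ D.reidx (𝟙 Y) (𝟙 Y) (D.comp (D.d Y) (D.d Y)) := h
    _ = D.d Y := by rw [D.d_comp, D.reidx_id]

lemma gr_total (D : RelDoctrine C P) {X Y : C} (f : X ⟶ Y) :
    D.Total (D.gr f) := by
  unfold RelDoctrine.Total
  have h1 := d_le_reidx_gr D f
  have h2 := d_le_reidx_conv_gr D f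
  calc D.d X = D.comp (D.d X) (D.d X) := (D.d_comp _).symm
    _ ≤ D.comp (D.reidx (𝟙 X) f (D.gr f)) (D.reidx f (𝟙 X) (D.conv (D.gr f))) :=
        D.comp_mono h1 h2
    _ ≤ D.reidx (𝟙 X) (𝟙 X) (D.comp (D.gr f) (D.conv (D.gr f))) :=
        D.comp_reidx_le (𝟙 X) f (𝟙 X) _ _
    _ = D.comp (D.gr f) (D.conv (D.gr f)) := D.reidx_id _

lemma gr_le_of_functional_total (D : RelDoctrine C P) {X Y : C} (f : X ⟶ Y)
    {α : P X Y} (hfun : D.Functional α) (htot : D.Total α) (hle : D.gr f ≤ α) :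
    α ≤ D.gr f := by
  have h1 : α = D.comp (D.d X) α := (D.d_comp α).symm
  calc α = D.comp (D.d X) α := h1
    _ ≤ D.comp (D.comp (D.gr f) (D.conv (D.gr f))) α :=
        D.comp_mono (gr_total D f) le_rfl
    _ = D.comp (D.gr f) (D.comp (D.conv (D.gr f)) α) := (D.comp_assoc _ _ _).symm
    _ ≤ D.comp (D.gr f) (D.comp (D.conv α) α) :=
        D.comp_mono le_rfl (D.comp_mono (D.conv_mono hle) le_rfl)
    _ ≤ D.comp (D.gr f) (D.d Y) := D.comp_mono le_rfl hfun
    _ = D.gr f := D.comp_d _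

/-- In an extensional relational doctrine satisfying the rule of unique choice, taking
graphs is a bijection from arrows onto functional and total relations. -/
theorem statement18 (D : RelDoctrine C P) (hext : D.Extensional) (hruc : D.RUC)
    (X Y : C) :
    Set.BijOn (fun f : X ⟶ Y => D.gr f) Set.univ
      {α : P X Y | D.Functional α ∧ D.Total α} := by
  refine ⟨fun f _ => ⟨gr_functional D f, gr_total D f⟩, ?_, ?_⟩
  · intro f _ g _ h
    apply hext
    unfold RelDoctrine.RExtEq
    have e : D.reidx f g (D.d Y) = D.reidx f (𝟙 X) (D.conv (D.gr g)) := by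
      have := D.reidx_comp f (𝟙 Y) (𝟙 X) g (D.d Y)
      rw [conv_gr]
      simpa using this
    rw [e, show D.gr g = D.gr f from h.symm]
    exact d_le_reidx_conv_gr D f
  · intro α hα
    obtain ⟨hfun, htot⟩ := hα
    obtain ⟨f, hf⟩ := hruc X Y α hfun htot
    exact ⟨f, Set.mem_univ f, le_antisymm hf (gr_le_of_functional_total D f hfun htot hf)⟩
end

section
/- Let R and S be relational doctrines with quotients, on categories C and D respectively, and let F = (F₀, F₁) : R → S be a strict 1-arrow that preserves quotient arrows, such that the functor F₀ : C → D has a left adjoint L : D → C. Then for every S-projective object P of D, the object L P is R-projective in C. -/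
open CategoryTheory

universe w w' v v' u u'

variable {C : Type u} [Category.{v} C] {P : C → C → Type w} [∀ X Y : C, PartialOrder (P X Y)]

/-- A strict 1-arrow of relational doctrines. -/
structure StrictHom {C : Type u} [Category.{v} C] {P : C → C → Type w}
    [∀ X Y : C, PartialOrder (P X Y)] {D' : Type u'} [Category.{v'} D']
    {P' : D' → D' → Type w'} [∀ X Y : D', PartialOrder (P' X Y)]
    (R : RelDoctrine C P) (S : RelDoctrine D' P') where
  toFunctor : C ⥤ D'
  onRel : ∀ {X Y : C}, P X Y → P' (toFunctor.obj X) (toFunctor.obj Y)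
  onRel_mono : ∀ {X Y : C}, Monotone (onRel (X := X) (Y := Y))
  onRel_natural : ∀ {A X B Y : C} (f : A ⟶ X) (g : B ⟶ Y) (α : P X Y),
      onRel (R.reidx f g α) = S.reidx (toFunctor.map f) (toFunctor.map g) (onRel α)
  onRel_d : ∀ X : C, onRel (R.d X) = S.d (toFunctor.obj X)
  onRel_comp : ∀ {X Y Z : C} (α : P X Y) (β : P Y Z),
      onRel (R.comp α β) = S.comp (onRel α) (onRel β)
  onRel_conv : ∀ {X Y : C} (α : P X Y), onRel (R.conv α) = S.conv (onRel α)

/-- A strict 1-arrow preserves quotient arrows. -/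
def StrictHom.PreservesQuotientArrows {C : Type u} [Category.{v} C] {P : C → C → Type w}
    [∀ X Y : C, PartialOrder (P X Y)] {D' : Type u'} [Category.{v'} D']
    {P' : D' → D' → Type w'} [∀ X Y : D', PartialOrder (P' X Y)]
    {R : RelDoctrine C P} {S : RelDoctrine D' P'} (F : StrictHom R S) : Prop :=
  ∀ (X W : C) (ρ : P X X) (q : X ⟶ W), R.IsEquivRel ρ → R.IsQuotientArrow ρ q →
    S.IsQuotientArrow (F.onRel ρ) (F.toFunctor.map q)

/-- Left adjoints of quotient-preserving strict 1-arrows preserve projective objects. -/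
theorem statement19 {C : Type u} [Category.{v} C] {P : C → C → Type w}
    [∀ X Y : C, PartialOrder (P X Y)] {D' : Type u'} [Category.{v'} D']
    {P' : D' → D' → Type w'} [∀ X Y : D', PartialOrder (P' X Y)]
    (R : RelDoctrine C P) (S : RelDoctrine D' P')
    (hR : R.HasQuotients) (hS : S.HasQuotients)
    (F : StrictHom R S) (hF : F.PreservesQuotientArrows)
    (L : D' ⥤ C) (adj : L ⊣ F.toFunctor)
    (Q : D') (hQ : S.ProjectiveObj Q) :
    R.ProjectiveObj (L.obj Q) := by
  intro X Y f q ρ hρ hq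
  have hSeq : S.IsEquivRel (F.onRel ρ) := by
    obtain ⟨h1, h2, h3⟩ := hρ
    refine ⟨?_, ?_, ?_⟩
    · rw [← F.onRel_d]; exact F.onRel_mono h1
    · rw [← F.onRel_conv]; exact F.onRel_mono h2
    · rw [← F.onRel_comp]; exact F.onRel_mono h3
  have hSq := hF X Y ρ q hρ hq
  obtain ⟨g, hg⟩ := hQ (F.toFunctor.obj X) (F.toFunctor.obj Y)
    (adj.homEquiv Q Y f) (F.toFunctor.map q) (F.onRel ρ) hSeq hSq
  refine ⟨(adj.homEquiv Q X).symm g, ?_⟩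
  have := (adj.homEquiv Q Y).symm_apply_apply f
  rw [← this, hg, Adjunction.homEquiv_symm_apply, Adjunction.homEquiv_symm_apply,
    Functor.map_comp, Category.assoc, adj.counit_naturality, Category.assoc]
end
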